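/- Let X be the SFT on alphabet {0,1,2,3} with transitions 0↔1, 0↔2, 0↔3 only (transition matrix with A_{0j}=A_{j0}=1 for j=1,2,3 and all other entries 0). Let φ ∈ LC_2(X,ℝ) take value 2 on cylinders C_2(01) and C_2(10) and value 1 on all other nonempty 2-cylinders. Then the periodic orbit measure μ_x of x = O(01) is the unique maximizing measure of φ: ∫φ dμ_x = 2 = b_φ, and every invariant measure μ ≠ μ_x satisfies ∫φ dμ < 2. -/

import Mathlib

open MeasureTheory
open scoped ENNReal

/-- The shift map on sequences. -/
def shift {A : Type*} (x : ℕ → A) : ℕ → A := fun n => x (n + 1)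

/-- The periodic point `O(01) = 010101…` in the alphabet `{0,1,2,3}`. -/
def O01' : ℕ → Fin 4 := fun n => if n % 2 = 0 then 0 else 1

namespace Statement19Aux

lemma measurable_shift : Measurable (shift : (ℕ → Fin 4) → ℕ → Fin 4) :=
  measurable_pi_lambda _ fun n => measurable_pi_apply (n + 1)

lemma shift_O01'_apply (n : ℕ) : shift O01' n = if n % 2 = 0 then 1 else 0 := by
  unfold shift O01'
  rcases Nat.mod_two_eq_zero_or_one n with h | h
  · have h1 : (n + 1) % 2 = 1 := by omega
    simp [h, h1]
  · have h1 : (n + 1) % 2 = 0 := by omega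
    simp [h, h1]

lemma shift_shift_O01' : shift (shift O01') = O01' := by
  funext n
  show O01' (n + 1 + 1) = O01' n
  unfold O01'
  have : (n + 1 + 1) % 2 = n % 2 := by omega
  rw [this]

lemma O01'_ne_shift : O01' ≠ shift O01' := by
  intro h
  have h0 := congrFun h 0
  rw [shift_O01'_apply] at h0
  simp [O01'] at h0

/-- The key 2-cylinder set. -/
def S : Set (ℕ → Fin 4) := {x | (x 0 = 0 ∧ x 1 = 1) ∨ (x 0 = 1 ∧ x 1 = 0)}

lemma measurableSet_S : MeasurableSet S := by
  have h0 : Measurable fun x : ℕ → Fin 4 => x 0 := measurable_pi_apply 0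
  have h1 : Measurable fun x : ℕ → Fin 4 => x 1 := measurable_pi_apply 1
  have : S = ((fun x : ℕ → Fin 4 => x 0) ⁻¹' {0} ∩ (fun x : ℕ → Fin 4 => x 1) ⁻¹' {1}) ∪
      ((fun x : ℕ → Fin 4 => x 0) ⁻¹' {1} ∩ (fun x : ℕ → Fin 4 => x 1) ⁻¹' {0}) := by
    ext x; simp [S]
  rw [this]
  exact ((h0 (measurableSet_singleton _)).inter (h1 (measurableSet_singleton _))).union
    ((h0 (measurableSet_singleton _)).inter (h1 (measurableSet_singleton _)))

lemma O01'_mem_S : O01' ∈ S := by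
  left
  constructor <;> simp [O01']

lemma shift_O01'_mem_S : shift O01' ∈ S := by
  right
  rw [shift_O01'_apply, shift_O01'_apply]
  simp

lemma half_mul : (2 : ℝ≥0∞)⁻¹ * ((1 : ℝ≥0∞) + 1) = 1 := by
  rw [one_add_one_eq_two, ENNReal.inv_mul_cancel] <;> norm_num

/-- Integral formula for `φ`. -/
lemma integral_phi {φ : (ℕ → Fin 4) → ℝ}
    (hφ : ∀ x : ℕ → Fin 4,
      φ x = if (x 0 = 0 ∧ x 1 = 1) ∨ (x 0 = 1 ∧ x 1 = 0) then 2 else 1)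
    (μ : Measure (ℕ → Fin 4)) [IsProbabilityMeasure μ] :
    ∫ x, φ x ∂μ = 1 + (μ S).toReal := by
  have hfe : φ = fun x => S.indicator (fun _ => (1 : ℝ)) x + 1 := by
    funext x
    rw [hφ]
    by_cases h : (x 0 = 0 ∧ x 1 = 1) ∨ (x 0 = 1 ∧ x 1 = 0)
    · rw [if_pos h, Set.indicator_of_mem (show x ∈ S from h)]; norm_num
    · rw [if_neg h, Set.indicator_of_notMem (show x ∉ S from h)]; norm_num
  rw [hfe, integral_add ((integrable_const (1 : ℝ)).indicator measurableSet_S)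
    (integrable_const 1), integral_indicator_const _ measurableSet_S, integral_const]
  simp [add_comm]; rfl

lemma iterate_shift_apply (n : ℕ) (x : ℕ → Fin 4) (m : ℕ) :
    shift^[n] x m = x (m + n) := by
  induction n generalizing x with
  | zero => rfl
  | succ n ih =>
    rw [Function.iterate_succ_apply, ih (shift x)]
    rfl

lemma μx_prob : IsProbabilityMeasure
    (((2 : ℝ≥0∞))⁻¹ • (Measure.dirac O01' + Measure.dirac (shift O01'))) := by
  constructor
  rw [Measure.smul_apply, Measure.add_apply, measure_univ, measure_univ, smul_eq_mul, half_mul]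

lemma μx_S : (((2 : ℝ≥0∞))⁻¹ • (Measure.dirac O01' + Measure.dirac (shift O01'))) S = 1 := by
  rw [Measure.smul_apply, Measure.add_apply, Measure.dirac_apply_of_mem O01'_mem_S,
    Measure.dirac_apply_of_mem shift_O01'_mem_S, smul_eq_mul, half_mul]

lemma μx_inv : (((2 : ℝ≥0∞))⁻¹ • (Measure.dirac O01' + Measure.dirac (shift O01'))).map shift
    = ((2 : ℝ≥0∞))⁻¹ • (Measure.dirac O01' + Measure.dirac (shift O01')) := by
  rw [Measure.map_smul, Measure.map_add _ _ measurable_shift,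
    Measure.map_dirac' measurable_shift, Measure.map_dirac' measurable_shift,
    shift_shift_O01', add_comm]

/-- Uniqueness: any shift-invariant probability giving full mass to `S` equals `μx`. -/
lemma unique (μ : Measure (ℕ → Fin 4)) (hp : IsProbabilityMeasure μ)
    (hinv : μ.map shift = μ) (hS1 : μ S = 1) :
    μ = ((2 : ℝ≥0∞))⁻¹ • (Measure.dirac O01' + Measure.dirac (shift O01')) := by
  classical
  have hpre : ∀ A : Set (ℕ → Fin 4), MeasurableSet A → μ (shift ⁻¹' A) = μ A := by
    intro A hA
    conv_rhs => rw [← hinv]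
    rw [Measure.map_apply measurable_shift hA]
  have hAnM : ∀ n : ℕ, MeasurableSet (shift^[n] ⁻¹' S) :=
    fun n => (measurable_shift.iterate n) measurableSet_S
  have hAn : ∀ n : ℕ, μ (shift^[n] ⁻¹' S) = 1 := by
    intro n
    induction n with
    | zero => simpa using hS1
    | succ n ih =>
      rw [Function.iterate_succ, Set.preimage_comp, hpre _ (hAnM n)]
      exact ih
  set T : Set (ℕ → Fin 4) := ⋂ n, shift^[n] ⁻¹' S with hTdef
  have hTmeas : MeasurableSet T := MeasurableSet.iInter hAnM
  have hTc : μ Tᶜ = 0 := by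
    have hcompl : Tᶜ = ⋃ n, (shift^[n] ⁻¹' S)ᶜ := by
      rw [hTdef, Set.compl_iInter]
    rw [hcompl]
    refine le_antisymm (le_trans (measure_iUnion_le _) ?_) zero_le
    have hz : ∀ n : ℕ, μ (shift^[n] ⁻¹' S)ᶜ = 0 := by
      intro n
      rw [measure_compl (hAnM n) (measure_ne_top μ _), hAn n, measure_univ, tsub_self]
    simp [hz]
  have hT1 : μ T = 1 := by
    have h := measure_add_measure_compl (μ := μ) hTmeas
    rw [hTc, add_zero, measure_univ] at h
    exact h
  -- characterize T
  have hmemT : ∀ x : ℕ → Fin 4, x ∈ T →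
      ∀ n, (x n = 0 ∧ x (n + 1) = 1) ∨ (x n = 1 ∧ x (n + 1) = 0) := by
    intro x hx n
    have hn := Set.mem_iInter.mp hx n
    have h0 : shift^[n] x 0 = x n := by rw [iterate_shift_apply]; ring_nf
    have h1 : shift^[n] x 1 = x (n + 1) := by rw [iterate_shift_apply]; ring_nf
    have := hn
    rw [Set.mem_preimage] at this
    rcases this with ⟨ha, hb⟩ | ⟨ha, hb⟩
    · left; exact ⟨h0 ▸ ha, h1 ▸ hb⟩
    · right; exact ⟨h0 ▸ ha, h1 ▸ hb⟩
  have hchar : T ⊆ {O01', shift O01'} := by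
    intro x hx
    have hx' := hmemT x hx
    rcases hx' 0 with ⟨h0, _⟩ | ⟨h0, _⟩
    · left
      funext n
      induction n with
      | zero => simpa [O01'] using h0
      | succ n ih =>
        rcases Nat.mod_two_eq_zero_or_one n with hm | hm
        · have hxn : x n = 0 := by rw [ih]; simp [O01', hm]
          have h1 : (n + 1) % 2 = 1 := by omega
          rcases hx' n with ⟨_, h⟩ | ⟨hbad, _⟩
          · rw [h]; simp [O01', h1]
          · rw [hxn] at hbad; exact absurd hbad (by decide)
        · have hxn : x n = 1 := by rw [ih]; simp [O01', hm]
          have h1 : (n + 1) % 2 = 0 := by omega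
          rcases hx' n with ⟨hbad, _⟩ | ⟨_, h⟩
          · rw [hxn] at hbad; exact absurd hbad (by decide)
          · rw [h]; simp [O01', h1]
    · right
      funext n
      induction n with
      | zero => rw [shift_O01'_apply]; simpa using h0
      | succ n ih =>
        rcases Nat.mod_two_eq_zero_or_one n with hm | hm
        · have hxn : x n = 1 := by rw [ih, shift_O01'_apply]; simp [hm]
          have h1 : (n + 1) % 2 = 1 := by omega
          rcases hx' n with ⟨hbad, _⟩ | ⟨_, h⟩
          · rw [hxn] at hbad; exact absurd hbad (by decide)
          · rw [h, shift_O01'_apply]; simp [h1]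
        · have hxn : x n = 0 := by rw [ih, shift_O01'_apply]; simp [hm]
          have h1 : (n + 1) % 2 = 0 := by omega
          rcases hx' n with ⟨_, h⟩ | ⟨hbad, _⟩
          · rw [h, shift_O01'_apply]; simp [h1]
          · rw [hxn] at hbad; exact absurd hbad (by decide)
  set a : ℕ → Fin 4 := O01'
  set b : ℕ → Fin 4 := shift O01'
  have hab_meas : MeasurableSet ({a, b} : Set (ℕ → Fin 4)) :=
    (measurableSet_singleton b).insert a
  have hab1 : μ ({a, b} : Set (ℕ → Fin 4)) = 1 :=
    le_antisymm prob_le_one (hT1 ▸ measure_mono hchar)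
  have habc : μ ({a, b} : Set (ℕ → Fin 4))ᶜ = 0 := by
    have h := measure_add_measure_compl (μ := μ) hab_meas
    rw [hab1, measure_univ] at h
    exact (ENNReal.add_right_inj ENNReal.one_ne_top).mp (h.trans (add_zero 1).symm)
  have hrestrict : ∀ E : Set (ℕ → Fin 4), μ E = μ (E ∩ {a, b}) := by
    intro E
    have h := measure_inter_add_diff (μ := μ) E hab_meas
    have hd : μ (E \ ({a, b} : Set (ℕ → Fin 4))) = 0 :=
      measure_mono_null (fun x hx => hx.2) habc
    rw [← h, hd, add_zero]
  have hane : a ≠ b := O01'_ne_shift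
  -- masses
  have hsum : μ {a} + μ {b} = 1 := by
    rw [← measure_union (by simp [hane]) (measurableSet_singleton b), ← Set.insert_eq]
    exact hab1
  have haeqb : μ {a} = μ {b} := by
    have h1 : μ (shift ⁻¹' {a}) = μ {a} := hpre _ (measurableSet_singleton a)
    have h2 : shift ⁻¹' {a} ∩ ({a, b} : Set (ℕ → Fin 4)) = {b} := by
      ext x
      simp only [Set.mem_inter_iff, Set.mem_preimage, Set.mem_singleton_iff,
        Set.mem_insert_iff]
      constructor
      · rintro ⟨hx1, rfl | rfl⟩
        · exact absurd hx1.symm hane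
        · rfl
      · rintro rfl
        exact ⟨shift_shift_O01', Or.inr rfl⟩
    rw [← h1, hrestrict (shift ⁻¹' {a}), h2]
  have ha_half : μ {a} = 2⁻¹ := by
    have h2 : (2 : ℝ≥0∞) * μ {a} = 1 := by
      rw [two_mul]
      nth_rewrite 2 [haeqb]
      exact hsum
    calc μ {a} = 2⁻¹ * (2 * μ {a}) := by
          rw [← mul_assoc, ENNReal.inv_mul_cancel two_ne_zero ENNReal.ofNat_ne_top, one_mul]
      _ = 2⁻¹ * 1 := by rw [h2]
      _ = 2⁻¹ := mul_one _
  have hb_half : μ {b} = 2⁻¹ := by rw [← haeqb, ha_half]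
  -- conclude
  ext E hE
  rw [hrestrict E]
  have hsplit : E ∩ ({a, b} : Set (ℕ → Fin 4)) = E ∩ {a} ∪ E ∩ {b} := by
    rw [← Set.inter_union_distrib_left]
    rfl
  have hdisj : Disjoint (E ∩ {a}) (E ∩ {b}) := by
    apply Set.disjoint_of_subset Set.inter_subset_right Set.inter_subset_right
    simp [hane]
  rw [hsplit, measure_union hdisj (hE.inter (measurableSet_singleton b))]
  rw [Measure.smul_apply, Measure.add_apply, Measure.dirac_apply' _ hE,
    Measure.dirac_apply' _ hE, smul_eq_mul]
  have hdir : ∀ c : ℕ → Fin 4,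
      E.indicator (1 : (ℕ → Fin 4) → ℝ≥0∞) c = if c ∈ E then 1 else 0 := by
    intro c
    by_cases h : c ∈ E <;> simp [h]
  rw [hdir, hdir]
  by_cases haE : a ∈ E <;> by_cases hbE : b ∈ E
  · rw [Set.inter_eq_right.mpr (Set.singleton_subset_iff.mpr haE),
      Set.inter_eq_right.mpr (Set.singleton_subset_iff.mpr hbE),
      ha_half, hb_half, if_pos haE, if_pos hbE]
    simp [mul_add]
  · rw [Set.inter_eq_right.mpr (Set.singleton_subset_iff.mpr haE),
      Set.inter_singleton_eq_empty.mpr hbE,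
      ha_half, if_pos haE, if_neg hbE]
    simp
  · rw [Set.inter_singleton_eq_empty.mpr haE,
      Set.inter_eq_right.mpr (Set.singleton_subset_iff.mpr hbE),
      hb_half, if_neg haE, if_pos hbE]
    simp
  · rw [Set.inter_singleton_eq_empty.mpr haE, Set.inter_singleton_eq_empty.mpr hbE,
      if_neg haE, if_neg hbE]
    simp

lemma O01'_mem_X : ∀ n, (O01' n = 0 ∧ O01' (n + 1) ≠ 0) ∨ (O01' n ≠ 0 ∧ O01' (n + 1) = 0) := by
  intro n
  rcases Nat.mod_two_eq_zero_or_one n with h | h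
  · left
    have h1 : (n + 1) % 2 = 1 := by omega
    simp [O01', h, h1]
  · right
    have h1 : (n + 1) % 2 = 0 := by omega
    simp [O01', h, h1]

lemma shift_O01'_mem_X :
    ∀ n, (shift O01' n = 0 ∧ shift O01' (n + 1) ≠ 0) ∨
      (shift O01' n ≠ 0 ∧ shift O01' (n + 1) = 0) := by
  intro n
  rw [shift_O01'_apply, shift_O01'_apply]
  rcases Nat.mod_two_eq_zero_or_one n with h | h
  · right
    have h1 : (n + 1) % 2 = 1 := by omega
    simp [h, h1]
  · left
    have h1 : (n + 1) % 2 = 0 := by omega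
    simp [h, h1]

end Statement19Aux

open Statement19Aux in
/-- Let `X ⊂ {0,1,2,3}^ℕ` be the SFT where `0` may be followed by `1,2,3`
and `1,2,3` may only be followed by `0`, and let `φ` take value `2` on the 2-cylinders
`C₂(01)`, `C₂(10)` and value `1` on all other nonempty 2-cylinders.  Then the periodic
orbit measure `μ_x` of `x = O(01)` is the unique maximizing measure of `φ`:
`∫ φ dμ_x = 2 = b_φ`, and every invariant measure `μ ≠ μ_x` (supported on `X`)
satisfies `∫ φ dμ < 2`. -/
theorem statement19
    (X : Set (ℕ → Fin 4))
    (hX : X = {x | ∀ n, (x n = 0 ∧ x (n + 1) ≠ 0) ∨ (x n ≠ 0 ∧ x (n + 1) = 0)})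
    (φ : (ℕ → Fin 4) → ℝ)
    (hφ : ∀ x : ℕ → Fin 4,
      φ x = if (x 0 = 0 ∧ x 1 = 1) ∨ (x 0 = 1 ∧ x 1 = 0) then 2 else 1)
    (M : Set (Measure (ℕ → Fin 4)))
    (hM : M = {μ | IsProbabilityMeasure μ ∧ μ.map shift = μ ∧ μ X = 1})
    (μx : Measure (ℕ → Fin 4))
    (hμx : μx = ((2 : ℝ≥0∞))⁻¹ • (Measure.dirac O01' + Measure.dirac (shift O01'))) :
    (∫ x, φ x ∂μx = 2) ∧
      IsGreatest {r : ℝ | ∃ μ ∈ M, r = ∫ x, φ x ∂μ} 2 ∧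
      (∀ μ ∈ M, μ ≠ μx → ∫ x, φ x ∂μ < 2) := by
  subst hμx
  haveI : IsProbabilityMeasure
      (((2 : ℝ≥0∞))⁻¹ • (Measure.dirac O01' + Measure.dirac (shift O01'))) := μx_prob
  have hint : ∫ x, φ x ∂(((2 : ℝ≥0∞))⁻¹ •
      (Measure.dirac O01' + Measure.dirac (shift O01'))) = 2 := by
    rw [integral_phi hφ, μx_S]
    norm_num
  have hmem : (((2 : ℝ≥0∞))⁻¹ • (Measure.dirac O01' + Measure.dirac (shift O01'))) ∈ M := by
    rw [hM]
    refine ⟨μx_prob, μx_inv, ?_⟩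
    rw [hX, Measure.smul_apply, Measure.add_apply,
      Measure.dirac_apply_of_mem (s := {x : ℕ → Fin 4 | ∀ n, (x n = 0 ∧ x (n + 1) ≠ 0) ∨
        (x n ≠ 0 ∧ x (n + 1) = 0)}) O01'_mem_X,
      Measure.dirac_apply_of_mem (s := {x : ℕ → Fin 4 | ∀ n, (x n = 0 ∧ x (n + 1) ≠ 0) ∨
        (x n ≠ 0 ∧ x (n + 1) = 0)}) shift_O01'_mem_X, smul_eq_mul, half_mul]
  have hub : ∀ r ∈ {r : ℝ | ∃ μ ∈ M, r = ∫ x, φ x ∂μ}, r ≤ 2 := by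
    rintro r ⟨μ, hμ, rfl⟩
    rw [hM] at hμ
    haveI := hμ.1
    rw [integral_phi hφ]
    have h1 : (μ S).toReal ≤ 1 := by
      have := ENNReal.toReal_mono ENNReal.one_ne_top (prob_le_one (μ := μ) (s := S))
      simpa using this
    linarith
  refine ⟨hint, ⟨⟨_, hmem, hint.symm⟩, hub⟩, ?_⟩
  intro μ hμ hne
  rw [hM] at hμ
  obtain ⟨hp, hinv, hXμ⟩ := hμ
  haveI := hp
  rw [integral_phi hφ]
  have hlt : μ S < 1 := by
    refine lt_of_le_of_ne prob_le_one ?_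
    intro h
    exact hne (unique μ hp hinv h)
  have : (μ S).toReal < 1 := by
    have := (ENNReal.toReal_lt_toReal (measure_ne_top μ S) ENNReal.one_ne_top).mpr hlt
    simpa using this
  linarith
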